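/- Let g be the maximal transitive prolongation of an extended translation algebra m = V + W with dim V ≥ 3. For every D ∈ g₁ there exists a unique s ∈ W such that [D, v] = v·s for all v ∈ V. -/

import Mathlib

universe u

/-- `(L, g, ιV, ιW)` is a transitive graded (Tanaka) prolongation of the fundamental
graded Lie algebra `m = m₋₂ + m₋₁ = V + W` with bracket `br : W × W → V`:
`g` is a ℤ-gradation of `L` by finite-dimensional subspaces, vanishing in degrees
`< -2`, transitive in non-negative degrees, and `ιV, ιW` identify `V, W` with
`g (-2), g (-1)` compatibly with the bracket. -/
structure IsGradedProlong (K : Type*) [Field K]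
    (V W : Type*) [AddCommGroup V] [Module K V] [AddCommGroup W] [Module K W]
    (L : Type*) [LieRing L] [LieAlgebra K L]
    (br : W →ₗ[K] W →ₗ[K] V)
    (g : ℤ → Submodule K L) (ιV : V →ₗ[K] L) (ιW : W →ₗ[K] L) : Prop where
  bracket_mem : ∀ i j : ℤ, ∀ x ∈ g i, ∀ y ∈ g j, ⁅x, y⁆ ∈ g (i + j)
  low_eq_bot : ∀ i : ℤ, i < -2 → g i = ⊥
  finite_dim : ∀ i : ℤ, FiniteDimensional K (g i)
  indep : iSupIndep g
  supr_eq_top : ⨆ i, g i = ⊤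
  transitive : ∀ p : ℤ, 0 ≤ p → ∀ x ∈ g p, (∀ y ∈ g (-1 : ℤ), ⁅x, y⁆ = 0) → x = 0
  range_iV : LinearMap.range ιV = g (-2 : ℤ)
  range_iW : LinearMap.range ιW = g (-1 : ℤ)
  inj_iV : Function.Injective ιV
  inj_iW : Function.Injective ιW
  bracket_iW : ∀ s t : W, ⁅ιW s, ιW t⁆ = ιV (br s t)

/-- `(L, g, ιV, ιW)` is the *maximal* transitive prolongation of `m = V + W`:
it is a transitive graded prolongation, and every other transitive graded
prolongation of `m` embeds into it by an injective graded Lie algebra morphism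
restricting to the identity on `m`. -/
def IsMaxGradedProlong (K : Type*) [Field K]
    (V W : Type*) [AddCommGroup V] [Module K V] [AddCommGroup W] [Module K W]
    (L : Type*) [LieRing L] [LieAlgebra K L]
    (br : W →ₗ[K] W →ₗ[K] V)
    (g : ℤ → Submodule K L) (ιV : V →ₗ[K] L) (ιW : W →ₗ[K] L) : Prop :=
  IsGradedProlong K V W L br g ιV ιW ∧
  ∀ (L' : Type u) [LieRing L'] [LieAlgebra K L']
    (g' : ℤ → Submodule K L') (ιV' : V →ₗ[K] L') (ιW' : W →ₗ[K] L'),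
    IsGradedProlong K V W L' br g' ιV' ιW' →
    ∃ φ : L' →ₗ⁅K⁆ L, Function.Injective φ ∧
      (∀ i : ℤ, ∀ x ∈ g' i, φ x ∈ g i) ∧
      (∀ v : V, φ (ιV' v) = ιV v) ∧ (∀ s : W, φ (ιW' s) = ιW s)

/-- If a linear map into a module vanishes on all anisotropic vectors of a
nondegenerate symmetric bilinear form (over a `CharZero` field), it vanishes. -/
private lemma ext_aniso {K V W : Type*} [Field K] [CharZero K]
    [AddCommGroup V] [Module K V] [AddCommGroup W] [Module K W]
    (B : V →ₗ[K] V →ₗ[K] K)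
    (hBsymm : ∀ v u : V, B v u = B u v)
    (hBnd : ∀ v : V, (∀ u : V, B v u = 0) → v = 0)
    (T : V →ₗ[K] W) (hT : ∀ v : V, B v v ≠ 0 → T v = 0) :
    ∀ v : V, T v = 0 := by
  intro v
  by_cases hv : B v v ≠ 0
  · exact hT v hv
  push_neg at hv
  by_cases hv0 : v = 0
  · simp [hv0]
  obtain ⟨z, hz⟩ : ∃ z, B v z ≠ 0 := by
    by_contra h
    push_neg at h
    exact hv0 (hBnd v h)
  have hq : ∀ t : K, B (v + t • z) (v + t • z) = t * (2 * B v z + t * B z z) := by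
    intro t
    simp only [map_add, map_smul, LinearMap.add_apply, LinearMap.smul_apply, smul_eq_mul]
    rw [hv, hBsymm z v]
    ring
  have key : ∀ t : K, t ≠ 0 → 2 * B v z + t * B z z ≠ 0 → T v + t • T z = 0 := by
    intro t h2 h1
    have h3 : T (v + t • z) = 0 := hT _ (by rw [hq]; exact mul_ne_zero h2 h1)
    simpa [map_add, map_smul] using h3
  have hgood : ∀ a : K, (2 * B v z + a * B z z ≠ 0) ∨ (2 * B v z + (-a) * B z z ≠ 0) := by
    intro a
    by_contra h
    push_neg at h
    obtain ⟨h1, h2⟩ := h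
    apply hz
    have : (4 : K) * B v z = 0 := by linear_combination h1 + h2
    have h4 : (4 : K) ≠ 0 := by norm_num
    exact (mul_eq_zero.mp this).resolve_left h4
  have main : ∀ t1 t2 : K, t1 ≠ 0 → t2 ≠ 0 → t1 ≠ t2 →
      (2 * B v z + t1 * B z z ≠ 0) → (2 * B v z + t2 * B z z ≠ 0) → T v = 0 := by
    intro t1 t2 h1 h2 h12 hg1 hg2
    have e1 := key t1 h1 hg1
    have e2 := key t2 h2 hg2
    have e3 : (t1 - t2) • T z = 0 := by
      have : (T v + t1 • T z) - (T v + t2 • T z) = 0 := by rw [e1, e2, sub_zero]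
      rw [← this, sub_smul]
      abel
    have hz0 : T z = 0 := by
      rcases smul_eq_zero.mp e3 with h | h
      · exact absurd (sub_eq_zero.mp h) h12
      · exact h
    have := e1
    rw [hz0, smul_zero, add_zero] at this
    exact this
  rcases hgood 1 with h1 | h1 <;> rcases hgood 2 with h2 | h2
  · exact main 1 2 one_ne_zero two_ne_zero (by norm_num) h1 h2
  · exact main 1 (-2) one_ne_zero (by norm_num) (by norm_num) h1 h2
  · exact main (-1) 2 (by norm_num) two_ne_zero (by norm_num) h1 h2
  · exact main (-1) (-2) (by norm_num) (by norm_num) (by norm_num) h1 h2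

/-- A nonzero space with a nondegenerate symmetric bilinear form in characteristic
zero has an anisotropic vector. -/
private lemma exists_aniso {K V : Type*} [Field K] [CharZero K]
    [AddCommGroup V] [Module K V]
    (B : V →ₗ[K] V →ₗ[K] K)
    (hBsymm : ∀ v u : V, B v u = B u v)
    (hBnd : ∀ v : V, (∀ u : V, B v u = 0) → v = 0)
    (hV : ∃ v : V, v ≠ 0) :
    ∃ v : V, B v v ≠ 0 := by
  obtain ⟨v, hv⟩ := hV
  by_cases h1 : B v v ≠ 0
  · exact ⟨v, h1⟩
  push_neg at h1
  obtain ⟨u, hu⟩ : ∃ u, B v u ≠ 0 := by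
    by_contra h
    push_neg at h
    exact hv (hBnd v h)
  by_cases h2 : B u u ≠ 0
  · exact ⟨u, h2⟩
  push_neg at h2
  refine ⟨v + u, ?_⟩
  have h3 : B (v + u) (v + u) = 2 * B v u := by
    simp only [map_add, LinearMap.add_apply]
    rw [h1, h2, hBsymm u v]
    ring
  rw [h3]
  exact mul_ne_zero two_ne_zero hu

/-- Main algebraic lemma: if `A : V → W` and a family `Ψ s : W → W` satisfy the
Jacobi-derived identity (I), then `A` is given by Clifford multiplication by a
single spinor `σ`. -/
private lemma clifford_form {K V W : Type*} [Field K] [CharZero K]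
    [AddCommGroup V] [Module K V] [AddCommGroup W] [Module K W] [FiniteDimensional K W]
    (B : V →ₗ[K] V →ₗ[K] K)
    (hBsymm : ∀ v u : V, B v u = B u v)
    (hBnd : ∀ v : V, (∀ u : V, B v u = 0) → v = 0)
    (cl : V →ₗ[K] W →ₗ[K] W)
    (hcl : ∀ (v : V) (s : W), cl v (cl v s) = -(B v v) • s)
    (bW : W →ₗ[K] W →ₗ[K] K)
    (hbWnd : ∀ s : W, (∀ t : W, bW s t = 0) → s = 0)
    (ε : K) (hε : ε = 1 ∨ ε = -1)
    (hbWrefl : ∀ s t : W, bW s t = -(ε * bW t s))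
    (hbWcl : ∀ (v : V) (s t : W), bW (cl v s) t = ε * bW s (cl v t))
    (br : W →ₗ[K] W →ₗ[K] V)
    (hbr : ∀ (s t : W) (v : V), B (br s t) v = bW (cl v s) t)
    (hV : ∃ v : V, v ≠ 0) (hW : Nontrivial W)
    (A : V →ₗ[K] W) (Ψ : W → (W →ₗ[K] W))
    (hI : ∀ (s t u : W) (x : V),
      bW (cl x (Ψ s t)) u + bW (cl x t) (Ψ s u) = -(bW (cl x s) (A (br t u)))) :
    ∃ σ : W, ∀ v : V, A v = cl v σ := by
  classical
  haveI := hW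
  have hε2 : ε * ε = 1 := by rcases hε with h | h <;> rw [h] <;> ring
  have hεne : ε ≠ 0 := by rcases hε with h | h <;> rw [h] <;> norm_num
  have hclmove : ∀ (v : V) (s t : W), bW s (cl v t) = ε * bW (cl v s) t := by
    intro v s t
    rw [hbWcl, ← mul_assoc, hε2, one_mul]
  have hnd2 : ∀ w : W, (∀ s : W, bW s w = 0) → w = 0 := by
    intro w hw
    refine hbWnd w fun t => ?_
    rw [hbWrefl w t, hw t, mul_zero, neg_zero]
  -- polarized Clifford relation
  have hpol : ∀ (x y : V) (s : W), cl x (cl y s) + cl y (cl x s) = (-(2 * B x y)) • s := by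
    intro x y s
    have h1 : cl x (cl y s) + cl y (cl x s)
        = cl (x + y) (cl (x + y) s) - cl x (cl x s) - cl y (cl y s) := by
      simp only [map_add, LinearMap.add_apply]
      abel
    rw [h1, hcl, hcl, hcl]
    have hB : B (x + y) (x + y) = B x x + 2 * B x y + B y y := by
      simp only [map_add, LinearMap.add_apply]
      rw [hBsymm y x]
      ring
    rw [hB, ← sub_smul, ← sub_smul]
    congr 1
    ring
  have hpolE : ∀ x y : V, cl x ∘ₗ cl y + cl y ∘ₗ cl x = (-(2 * B x y)) • LinearMap.id := by
    intro x y
    ext s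
    simp only [LinearMap.add_apply, LinearMap.comp_apply, LinearMap.smul_apply,
      LinearMap.id_apply]
    exact hpol x y s
  -- bases and traces
  have hbnd : LinearMap.BilinForm.Nondegenerate bW := ⟨hbWnd, hnd2⟩
  set ι := Module.Free.ChooseBasisIndex K W with hι
  let b : Module.Basis ι K W := Module.Free.chooseBasis K W
  let d : Module.Basis ι K W := LinearMap.BilinForm.dualBasis bW hbnd b
  have hdb : ∀ i j, bW (d i) (b j) = if j = i then 1 else 0 := fun i j =>
    LinearMap.BilinForm.apply_dualBasis_left (B := bW) hbnd b i j
  have hrepr : ∀ (x : W) (i : ι), b.repr x i = bW (d i) x := by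
    intro x i
    have hx := b.sum_repr x
    calc b.repr x i = ∑ j, b.repr x j * bW (d i) (b j) := by
          rw [Finset.sum_eq_single i]
          · rw [hdb i i, if_pos rfl, mul_one]
          · intro j _ hj
            rw [hdb i j, if_neg hj, mul_zero]
          · intro h
            exact absurd (Finset.mem_univ i) h
      _ = bW (d i) x := by
          conv_rhs => rw [← hx]
          rw [map_sum]
          simp only [map_smul, smul_eq_mul]
  have tr1 : ∀ F : W →ₗ[K] W, LinearMap.trace K W F = ∑ i, bW (d i) (F (b i)) := by
    intro F
    rw [LinearMap.trace_eq_matrix_trace K b F, Matrix.trace]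
    refine Finset.sum_congr rfl fun i _ => ?_
    rw [Matrix.diag_apply, LinearMap.toMatrix_apply, hrepr]
  have tr2 : ∀ F : W →ₗ[K] W, LinearMap.trace K W F = ∑ i, bW (F (d i)) (b i) := by
    intro F
    rw [LinearMap.trace_eq_matrix_trace K d F, Matrix.trace]
    refine Finset.sum_congr rfl fun i _ => ?_
    rw [Matrix.diag_apply, LinearMap.toMatrix_apply,
      LinearMap.BilinForm.dualBasis_repr_apply]
  set N : ℕ := Module.finrank K W with hNdef
  have hN0 : (N : K) ≠ 0 := Nat.cast_ne_zero.mpr Module.finrank_pos.ne'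
  have trcl : ∀ y z : V, LinearMap.trace K W (cl y ∘ₗ cl z) = -((N : K) * B y z) := by
    intro y z
    have h2 := congrArg (LinearMap.trace K W) (hpolE y z)
    rw [map_add, map_smul, LinearMap.trace_id] at h2
    have hcomm : LinearMap.trace K W (cl z ∘ₗ cl y) = LinearMap.trace K W (cl y ∘ₗ cl z) := by
      rw [← Module.End.mul_eq_comp, ← Module.End.mul_eq_comp]
      exact LinearMap.trace_mul_comm K (cl z) (cl y)
    rw [hcomm, smul_eq_mul] at h2
    linear_combination h2 / 2
  have sum1 : ∀ (x y : V) (Z : W →ₗ[K] W),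
      (∑ i, bW (cl x (Z (d i))) (cl y (b i)))
        = ε * LinearMap.trace K W (cl y ∘ₗ cl x ∘ₗ Z) := by
    intro x y Z
    rw [tr2 (cl y ∘ₗ cl x ∘ₗ Z), Finset.mul_sum]
    refine Finset.sum_congr rfl fun i _ => ?_
    rw [hclmove y (cl x (Z (d i))) (b i)]
    simp [LinearMap.comp_apply]
  have sum2 : ∀ (x : V) (G : W →ₗ[K] W),
      (∑ i, bW (cl x (d i)) (G (b i))) = ε * LinearMap.trace K W (cl x ∘ₗ G) := by
    intro x G
    rw [tr1 (cl x ∘ₗ G), Finset.mul_sum]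
    refine Finset.sum_congr rfl fun i _ => ?_
    rw [hbWcl x (d i) (G (b i))]
    simp [LinearMap.comp_apply]
  have hw : ∀ y : V, (∑ i, br (d i) (cl y (b i))) = (-(ε * N)) • y := by
    intro y
    have hz : ∀ z : V, B ((∑ i, br (d i) (cl y (b i))) - (-(ε * N)) • y) z = 0 := by
      intro z
      rw [map_sub, LinearMap.sub_apply, map_smul, LinearMap.smul_apply]
      have h1 : B (∑ i, br (d i) (cl y (b i))) z = ∑ i, bW (cl z (d i)) (cl y (b i)) := by
        rw [map_sum, LinearMap.sum_apply]
        exact Finset.sum_congr rfl fun i _ => hbr (d i) (cl y (b i)) z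
      rw [h1, sum2 z (cl y), trcl z y, hBsymm z y, smul_eq_mul]
      ring
    have h0 := hBnd _ hz
    exact sub_eq_zero.mp h0
  -- the key trace identity
  have ht : ∀ (s : W) (x y : V),
      2 * LinearMap.trace K W (cl y ∘ₗ cl x ∘ₗ Ψ s) = (N : K) * bW (cl x s) (A y) := by
    intro s x y
    have hsum : (∑ i, (bW (cl x (Ψ s (d i))) (cl y (b i))
          + bW (cl x (d i)) (Ψ s (cl y (b i)))))
        = ∑ i, -(bW (cl x s) (A (br (d i) (cl y (b i))))) :=
      Finset.sum_congr rfl fun i _ => hI s (d i) (cl y (b i)) x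
    rw [Finset.sum_add_distrib, sum1 x y (Ψ s)] at hsum
    have h2 : (∑ i, bW (cl x (d i)) (Ψ s (cl y (b i))))
        = ε * LinearMap.trace K W (cl x ∘ₗ (Ψ s ∘ₗ cl y)) := by
      have h := sum2 x (Ψ s ∘ₗ cl y)
      simpa [LinearMap.comp_apply] using h
    rw [h2] at hsum
    have h3 : (∑ i, -(bW (cl x s) (A (br (d i) (cl y (b i))))))
        = -(bW (cl x s) (A ((-(ε * N)) • y))) := by
      rw [← hw y, map_sum, map_sum, ← Finset.sum_neg_distrib]
    rw [h3] at hsum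
    have h4 : LinearMap.trace K W (cl x ∘ₗ (Ψ s ∘ₗ cl y))
        = LinearMap.trace K W (cl y ∘ₗ cl x ∘ₗ Ψ s) := by
      rw [show cl x ∘ₗ (Ψ s ∘ₗ cl y) = (cl x ∘ₗ Ψ s) ∘ₗ cl y from by
        rw [LinearMap.comp_assoc]]
      rw [← Module.End.mul_eq_comp, ← Module.End.mul_eq_comp, LinearMap.trace_mul_comm,
        Module.End.mul_eq_comp, Module.End.mul_eq_comp]
    rw [h4, map_smul, map_smul, smul_eq_mul] at hsum
    apply mul_left_cancel₀ hεne
    linear_combination hsum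
  have hsym : ∀ (s : W) (x y : V),
      (N : K) * (bW (cl x s) (A y) + bW (cl y s) (A x))
        = -4 * B x y * LinearMap.trace K W (Ψ s) := by
    intro s x y
    have h1 := ht s x y
    have h2 := ht s y x
    have hc : (cl y ∘ₗ cl x ∘ₗ Ψ s) + (cl x ∘ₗ cl y ∘ₗ Ψ s) = (-(2 * B y x)) • Ψ s := by
      rw [← LinearMap.comp_assoc, ← LinearMap.comp_assoc, ← LinearMap.add_comp, hpolE y x,
        LinearMap.smul_comp, LinearMap.id_comp]
    have h3 := congrArg (LinearMap.trace K W) hc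
    rw [map_add, map_smul, smul_eq_mul, hBsymm y x] at h3
    linear_combination (-1 : K) * h1 - h2 + 2 * h3
  have hfin : ∀ (s : W) (x y : V),
      (N : K) * bW s (cl x (A y) + cl y (A x))
        = -4 * ε * B x y * LinearMap.trace K W (Ψ s) := by
    intro s x y
    have h := hsym s x y
    rw [hbWcl x s (A y), hbWcl y s (A x)] at h
    rw [map_add]
    linear_combination ε * h
      - ((N : K) * (bW s (cl x (A y)) + bW s (cl y (A x)))) * hε2
  -- choose x0, y0 with B x0 y0 = 1
  obtain ⟨v0, hv0⟩ := exists_aniso B hBsymm hBnd hV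
  set x0 : V := v0 with hx0
  set y0 : V := (B v0 v0)⁻¹ • v0 with hy0
  have hxy : B x0 y0 = 1 := by
    rw [hx0, hy0, map_smul, smul_eq_mul]
    exact inv_mul_cancel₀ hv0
  set c0 : W := cl x0 (A y0) + cl y0 (A x0) with hc0def
  have hkey : ∀ x y : V, cl x (A y) + cl y (A x) = (B x y) • c0 := by
    intro x y
    have hzero : ∀ s, bW s (cl x (A y) + cl y (A x) - (B x y) • c0) = 0 := by
      intro s
      rw [map_sub, map_smul, smul_eq_mul]
      have h1 := hfin s x y
      have h2 := hfin s x0 y0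
      rw [hxy] at h2
      have h3 : (N : K) * (bW s (cl x (A y) + cl y (A x)) - B x y * bW s c0) = 0 := by
        rw [hc0def]
        linear_combination h1 - B x y * h2
      have h4 := (mul_eq_zero.mp h3).resolve_left hN0
      linear_combination h4
    have h0 := hnd2 _ hzero
    exact sub_eq_zero.mp h0
  refine ⟨(-(2 : K))⁻¹ • c0, ?_⟩
  set σ : W := (-(2 : K))⁻¹ • c0 with hσdef
  have hc0 : c0 = (-(2 : K)) • σ := by
    rw [hσdef, smul_smul, mul_inv_cancel₀ (by norm_num : (-(2 : K)) ≠ 0), one_smul]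
  have haniso : ∀ v : V, B v v ≠ 0 → A v - cl v σ = 0 := by
    intro v hv
    have e : cl v (A v) + cl v (A v) = B v v • ((-(2 : K)) • σ) := by
      rw [← hc0]
      exact hkey v v
    have e2 : (2 : K) • cl v (A v) = (2 : K) • (-(B v v) • σ) := by
      calc (2 : K) • cl v (A v) = cl v (A v) + cl v (A v) := two_smul K _
        _ = B v v • ((-(2 : K)) • σ) := e
        _ = (2 : K) • (-(B v v) • σ) := by module
    have h1 : cl v (A v) = -(B v v) • σ := smul_right_injective W two_ne_zero e2
    have h3 : cl v (A v - cl v σ) = 0 := by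
      rw [map_sub, h1, hcl v σ, sub_self]
    have h4 : cl v (cl v (A v - cl v σ)) = 0 := by rw [h3, map_zero]
    rw [hcl] at h4
    rcases smul_eq_zero.mp h4 with h5 | h5
    · exact absurd (neg_eq_zero.mp h5) hv
    · exact h5
  have hTzero := ext_aniso B hBsymm hBnd (A - (LinearMap.flip cl) σ) (fun v hv => by
    simpa [LinearMap.sub_apply, LinearMap.flip_apply] using haniso v hv)
  intro v
  have hv := hTzero v
  simp only [LinearMap.sub_apply, LinearMap.flip_apply] at hv
  exact sub_eq_zero.mp hv

/-- in the maximal transitive prolongation `g` of an extended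
translation algebra `m = V + W` with `dim V ≥ 3`, every `D ∈ g₁` determines a
unique spinor `s ∈ W` with `⁅D, v⁆ = v·s` for all `v ∈ V`. -/
theorem g1_determined_by_spinor
    {K : Type*} [Field K] [CharZero K]
    {V : Type*} [AddCommGroup V] [Module K V] [FiniteDimensional K V]
    {W : Type*} [AddCommGroup W] [Module K W]
    {L : Type*} [LieRing L] [LieAlgebra K L]
    (hdim : 3 ≤ Module.finrank K V)
    (B : V →ₗ[K] V →ₗ[K] K)
    (hBsymm : ∀ v u : V, B v u = B u v)
    (hBnd : ∀ v : V, (∀ u : V, B v u = 0) → v = 0)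
    (cl : V →ₗ[K] W →ₗ[K] W)
    (hcl : ∀ (v : V) (s : W), cl v (cl v s) = -(B v v) • s)
    (bW : W →ₗ[K] W →ₗ[K] K)
    (hbWnd : ∀ s : W, (∀ t : W, bW s t = 0) → s = 0)
    (ε : K) (hε : ε = 1 ∨ ε = -1)
    (hbWrefl : ∀ s t : W, bW s t = -(ε * bW t s))
    (hbWcl : ∀ (v : V) (s t : W), bW (cl v s) t = ε * bW s (cl v t))
    (br : W →ₗ[K] W →ₗ[K] V)
    (hbr : ∀ (s t : W) (v : V), B (br s t) v = bW (cl v s) t)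
    (g : ℤ → Submodule K L) (ιV : V →ₗ[K] L) (ιW : W →ₗ[K] L)
    (hmax : IsMaxGradedProlong K V W L br g ιV ιW)
    : ∀ D ∈ g (1 : ℤ), ∃! s : W, ∀ v : V, ⁅D, ιV v⁆ = ιW (cl v s) := by
  classical
  obtain ⟨hp, -⟩ := hmax
  intro D hD
  -- W is finite dimensional
  haveI : FiniteDimensional K (g (-1 : ℤ)) := hp.finite_dim (-1)
  let eW : W ≃ₗ[K] ↥(g (-1 : ℤ)) :=
    (LinearEquiv.ofInjective ιW hp.inj_iW).trans (LinearEquiv.ofEq _ _ hp.range_iW)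
  haveI : FiniteDimensional K W := LinearEquiv.finiteDimensional eW.symm
  have heW : ∀ s : W, ((eW s : ↥(g (-1 : ℤ))) : L) = ιW s := by
    intro s
    simp [eW, LinearEquiv.trans_apply]
  have hιWeW : ∀ z : ↥(g (-1 : ℤ)), ιW (eW.symm z) = (z : L) := by
    intro z
    rw [← heW (eW.symm z), eW.apply_symm_apply]
  have hmemV : ∀ v : V, ιV v ∈ g (-2 : ℤ) := by
    intro v
    rw [← hp.range_iV]
    exact LinearMap.mem_range_self _ v
  have hmemW : ∀ s : W, ιW s ∈ g (-1 : ℤ) := by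
    intro s
    rw [← hp.range_iW]
    exact LinearMap.mem_range_self _ s
  -- brackets with D land in the right degrees
  have hAmem : ∀ v : V, ⁅D, ιV v⁆ ∈ g (-1 : ℤ) := by
    intro v
    have h := hp.bracket_mem 1 (-2) D hD (ιV v) (hmemV v)
    have he : ((1 : ℤ) + -2) = -1 := by norm_num
    rwa [he] at h
  have hEmem : ∀ s : W, ⁅D, ιW s⁆ ∈ g (0 : ℤ) := by
    intro s
    have h := hp.bracket_mem 1 (-1) D hD (ιW s) (hmemW s)
    have he : ((1 : ℤ) + -1) = 0 := by norm_num
    rwa [he] at h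
  have hΨmem : ∀ s t : W, ⁅⁅D, ιW s⁆, ιW t⁆ ∈ g (-1 : ℤ) := by
    intro s t
    have h := hp.bracket_mem 0 (-1) _ (hEmem s) (ιW t) (hmemW t)
    have he : ((0 : ℤ) + -1) = -1 := by norm_num
    rwa [he] at h
  -- define A
  let A : V →ₗ[K] W :=
    eW.symm.toLinearMap ∘ₗ
      ((LieAlgebra.ad K L D ∘ₗ ιV).codRestrict (g (-1 : ℤ)) (fun v => by
        simpa [LieAlgebra.ad_apply] using hAmem v))
  have hA : ∀ v : V, ιW (A v) = ⁅D, ιV v⁆ := by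
    intro v
    show ιW (eW.symm _) = _
    rw [hιWeW]
    simp [LieAlgebra.ad_apply]
  -- define Ψ
  let Ψ : W → (W →ₗ[K] W) := fun s =>
    eW.symm.toLinearMap ∘ₗ
      ((LieAlgebra.ad K L ⁅D, ιW s⁆ ∘ₗ ιW).codRestrict (g (-1 : ℤ)) (fun t => by
        simpa [LieAlgebra.ad_apply] using hΨmem s t))
  have hΨ : ∀ s t : W, ιW (Ψ s t) = ⁅⁅D, ιW s⁆, ιW t⁆ := by
    intro s t
    show ιW (eW.symm _) = _
    rw [hιWeW]
    simp [LieAlgebra.ad_apply]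
  -- vanishing bracket g(-1), g(-2)
  have hWV : ∀ (s : W) (v : V), ⁅ιW s, ιV v⁆ = 0 := by
    intro s v
    have h := hp.bracket_mem (-1) (-2) (ιW s) (hmemW s) (ιV v) (hmemV v)
    have he : ((-1 : ℤ) + -2) = -3 := by norm_num
    rw [he, hp.low_eq_bot (-3) (by norm_num)] at h
    simpa using h
  -- relation R1
  have hR1 : ∀ (s : W) (v : V), ⁅⁅D, ιW s⁆, ιV v⁆ = -(ιV (br s (A v))) := by
    intro s v
    rw [lie_lie, hWV s v, lie_zero, ← hA v, hp.bracket_iW, zero_sub]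
  -- main vector identity
  have hstar : ∀ s t u : W,
      br (Ψ s t) u + br t (Ψ s u) = -(br s (A (br t u))) := by
    intro s t u
    apply hp.inj_iV
    have h1 : ⁅⁅D, ιW s⁆, ιV (br t u)⁆ = ιV (br (Ψ s t) u + br t (Ψ s u)) := by
      rw [← hp.bracket_iW t u, leibniz_lie, ← hΨ s t, ← hΨ s u,
        hp.bracket_iW, hp.bracket_iW, ← map_add]
    rw [map_neg, ← hR1 s (br t u), h1]
  -- scalar identity (I)
  have hI : ∀ (s t u : W) (x : V),
      bW (cl x (Ψ s t)) u + bW (cl x t) (Ψ s u) = -(bW (cl x s) (A (br t u))) := by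
    intro s t u x
    have h := congrArg (fun w => B w x) (hstar s t u)
    simp only [map_add, map_neg, LinearMap.add_apply, LinearMap.neg_apply] at h
    rw [hbr, hbr, hbr] at h
    exact h
  by_cases hWt : Subsingleton W
  · refine ⟨0, fun v => ?_, fun y _ => Subsingleton.elim _ _⟩
    obtain ⟨w, hw⟩ : ⁅D, ιV v⁆ ∈ LinearMap.range ιW := by
      rw [hp.range_iW]
      exact hAmem v
    rw [← hw]
    congr 1
    exact Subsingleton.elim _ _
  · haveI hWnt : Nontrivial W := not_subsingleton_iff_nontrivial.mp hWt
    have hV : ∃ v : V, v ≠ 0 := by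
      haveI : Nontrivial V :=
        Module.nontrivial_of_finrank_pos (R := K) (M := V) (by omega)
      exact exists_ne 0
    obtain ⟨σ, hσ⟩ := clifford_form B hBsymm hBnd cl hcl bW hbWnd ε hε hbWrefl hbWcl
      br hbr hV hWnt A Ψ hI
    refine ⟨σ, fun v => by rw [← hA v, hσ v], ?_⟩
    intro y hy
    have h1 : ∀ v : V, cl v y = cl v σ := by
      intro v
      apply hp.inj_iW
      rw [← hy v, ← hσ v, hA v]
    obtain ⟨v0, hv0⟩ := exists_aniso B hBsymm hBnd hV
    have h2 : cl v0 (y - σ) = 0 := by rw [map_sub, h1 v0, sub_self]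
    have h3 : cl v0 (cl v0 (y - σ)) = 0 := by rw [h2, map_zero]
    rw [hcl] at h3
    rcases smul_eq_zero.mp h3 with h4 | h4
    · exact absurd (neg_eq_zero.mp h4) hv0
    · exact sub_eq_zero.mp h4
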